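/- arXiv:2310.09271 — 2 statements merged into one kernel-verified Lean document; each statement's English description precedes it below -/
import Mathlib

section
/- Consider the quasi-proportional first-price auction with parameter alpha ≥ 1 and n bidders at an equilibrium bid profile. Fix a bidder i with V_i < B_i and a query j with v_{i,j} > 0, and suppose 0 < pi_{i,j} ≤ eta for some eta in (0,1). Then Spend(j) ≥ v_{i,j} · alpha · (1 − eta) / ((n · eta)^{1/alpha} · (alpha − alpha·eta + 1)). -/
open Finset
open scoped Classical

noncomputable section

/-- An allocation: each entry in `[0,1]`, and each query allocated total probability at most 1. -/
def IsAlloc {n q : ℕ} (π : Fin n → Fin q → ℝ) : Prop :=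
  (∀ i j, 0 ≤ π i j) ∧ (∀ i j, π i j ≤ 1) ∧ ∀ j, ∑ i, π i j ≤ 1

/-- An integral (deterministic) allocation. -/
def IsIntegralAlloc {n q : ℕ} (π : Fin n → Fin q → ℝ) : Prop :=
  IsAlloc π ∧ ∀ i j, π i j = 0 ∨ π i j = 1

/-- Liquid welfare of an allocation. -/
def allocLW {n q : ℕ} (B : Fin n → ℝ) (v π : Fin n → Fin q → ℝ) : ℝ :=
  ∑ i, min (B i) (∑ j, π i j * v i j)

/-- Probability that bidder `i` wins query `j` in the quasi-proportional FPA with parameter `α`. -/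
def qpPi {n q : ℕ} (α : ℝ) (b : Fin n → Fin q → ℝ) (i : Fin n) (j : Fin q) : ℝ :=
  if ∀ i', b i' j = 0 then 0
  else b i j ^ α / ∑ i', b i' j ^ α

/-- Expected value of bidder `i`. -/
def qpV {n q : ℕ} (α : ℝ) (v b : Fin n → Fin q → ℝ) (i : Fin n) : ℝ :=
  ∑ j, qpPi α b i j * v i j

/-- Expected spend on query `j`. -/
def qpSpendQ {n q : ℕ} (α : ℝ) (b : Fin n → Fin q → ℝ) (j : Fin q) : ℝ :=
  ∑ i, qpPi α b i j * b i j

/-- Expected spend of bidder `i`. -/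
def qpSpendI {n q : ℕ} (α : ℝ) (b : Fin n → Fin q → ℝ) (i : Fin n) : ℝ :=
  ∑ j, qpPi α b i j * b i j

/-- Liquid welfare of a bid profile in the quasi-proportional FPA. -/
def qpLW {n q : ℕ} (α : ℝ) (B : Fin n → ℝ) (v b : Fin n → Fin q → ℝ) : ℝ :=
  ∑ i, min (B i) (qpV α v b i)

/-- Equilibrium bid profile for the quasi-proportional FPA with ROS and budget constraints. -/
def IsQpEq {n q : ℕ} (α : ℝ) (B : Fin n → ℝ) (v b : Fin n → Fin q → ℝ) : Prop :=
  (∀ i j, 0 ≤ b i j) ∧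
  (∀ i, qpSpendI α b i ≤ min (B i) (qpV α v b i)) ∧
  (∀ i (b' : Fin q → ℝ), (∀ j, 0 ≤ b' j) →
    qpV α v (Function.update b i b') i ≤ qpV α v b i ∨
    min (B i) (qpV α v (Function.update b i b') i)
      < qpSpendI α (Function.update b i b') i)

/-- Power-mean lower bound on the per-query spend ratio. -/
lemma qp_spend_ge {n : ℕ} (α : ℝ) (hα : 1 ≤ α) (c : Fin n → ℝ) (hc : ∀ i, 0 ≤ c i)
    (hS : 0 < ∑ i, c i ^ α) :
    ((∑ i, c i ^ α) / n) ^ (1/α) ≤ (∑ i, c i ^ α * c i) / (∑ i, c i ^ α) := by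
  have hα0 : (0:ℝ) < α := lt_of_lt_of_le one_pos hα
  set S := ∑ i, c i ^ α with hSdef
  have hn : 0 < n := by
    rcases Nat.eq_zero_or_pos n with h | h
    · subst h; simp [hSdef] at hS
    · exact h
  have hnR : (0:ℝ) < n := by exact_mod_cast hn
  set p : ℝ := (α + 1) / α with hp
  have hp1 : 1 ≤ p := by
    rw [hp, le_div_iff₀ hα0]; linarith
  have hterm : ∀ i : Fin n, (c i ^ α) ^ p = c i ^ α * c i := by
    intro i
    rcases eq_or_lt_of_le (hc i) with h | h
    · rw [← h, Real.zero_rpow (ne_of_gt hα0), Real.zero_rpow (by positivity), zero_mul]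
    · rw [← Real.rpow_mul (le_of_lt h)]
      have : α * p = α + 1 := by rw [hp, mul_div_assoc']; exact mul_div_cancel_left₀ _ (ne_of_gt hα0)
      rw [this, Real.rpow_add h, Real.rpow_one]
  have hmean := Real.rpow_arith_mean_le_arith_mean_rpow univ (fun _ : Fin n => (n:ℝ)⁻¹)
    (fun i => c i ^ α) (fun i _ => by positivity)
    (by simp [Finset.card_univ, mul_comm]; field_simp) (fun i _ => Real.rpow_nonneg (hc i) α) hp1
  simp only [← Finset.mul_sum] at hmean
  have hsum : ∑ i, (c i ^ α) ^ p = ∑ i, c i ^ α * c i := by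
    exact Finset.sum_congr rfl (fun i _ => hterm i)
  rw [hsum] at hmean
  have hSn : (0:ℝ) < S / n := by positivity
  have key : (S / n) ^ p ≤ (n:ℝ)⁻¹ * ∑ i, c i ^ α * c i := by
    rwa [div_eq_inv_mul]
  have hpe : p = 1/α + 1 := by rw [hp]; field_simp; ring
  have h2 : (S/n)^p = (S/n)^(1/α) * (S/n) := by
    rw [hpe, Real.rpow_add hSn, Real.rpow_one]
  rw [h2] at key
  have h3 : (S/n)^(1/α) ≤ ((n:ℝ)⁻¹ * ∑ i, c i ^ α * c i)/(S/n) := by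
    rw [le_div_iff₀ hSn]; exact key
  have h4 : ((n:ℝ)⁻¹ * ∑ i, c i ^ α * c i)/(S/n) = (∑ i, c i ^ α * c i)/S := by
    field_simp
  rwa [h4] at h3

/-- `qpPi` only depends on the bids for the given query. -/
lemma qpPi_congr {n q : ℕ} (α : ℝ) (b1 b2 : Fin n → Fin q → ℝ) (i : Fin n) (j : Fin q)
    (h : ∀ i', b1 i' j = b2 i' j) : qpPi α b1 i j = qpPi α b2 i j := by
  unfold qpPi
  simp only [h]

/-- Existence of a profitable local deviation when the current bid is too low. -/
lemma qp_exists_dev (α vv T β ε : ℝ) (hα : 1 ≤ α) (hT : 0 < T) (hβ : 0 < β) (hβv : β < vv)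
    (hkey : β * (β ^ α + T) < α * (vv - β) * T) (hε : 0 < ε) :
    ∃ x : ℝ, β < x ∧ x < vv ∧ 0 ≤ x ∧
      β ^ α / (β ^ α + T) * (vv - β) ≤ x ^ α / (x ^ α + T) * (vv - x) ∧
      x ^ α / (x ^ α + T) ≤ β ^ α / (β ^ α + T) + ε := by
  have hα0 : (0:ℝ) < α := lt_of_lt_of_le one_pos hα
  set φ : ℝ → ℝ := fun x => x ^ α * (vv - x) / (x ^ α + T) with hφ
  set P : ℝ → ℝ := fun x => x ^ α / (x ^ α + T) with hP
  have hβα : (0:ℝ) < β ^ α := Real.rpow_pos_of_pos hβ α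
  have hden : (0:ℝ) < β ^ α + T := by linarith
  have h1 : HasDerivAt (fun x : ℝ => x ^ α) (α * β ^ (α - 1)) β := by
    have := Real.hasDerivAt_rpow_const (x := β) (p := α) (Or.inl (ne_of_gt hβ))
    simpa [mul_comm] using this
  have h2 : HasDerivAt (fun x : ℝ => vv - x) (-1) β := by
    simpa using (hasDerivAt_id β).const_sub vv
  have hnum := h1.mul h2
  have hden' := h1.add_const T
  have hφd := hnum.div hden' (ne_of_gt hden)
  set D : ℝ := ((α * β ^ (α - 1) * (vv - β) + β ^ α * (-1)) * (β ^ α + T) -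
      β ^ α * (vv - β) * (α * β ^ (α - 1))) / (β ^ α + T) ^ 2 with hD
  have hφD : HasDerivAt φ D β := hφd
  have hA : (0:ℝ) < β ^ (α - 1) := Real.rpow_pos_of_pos hβ _
  have hsplit : β ^ α = β ^ (α - 1) * β := by
    rw [← Real.rpow_add_one (ne_of_gt hβ)]; ring_nf
  have hDpos : 0 < D := by
    rw [hD]
    apply div_pos _ (by positivity)
    have : (α * β ^ (α - 1) * (vv - β) + β ^ α * (-1)) * (β ^ α + T) -
        β ^ α * (vv - β) * (α * β ^ (α - 1))
        = β ^ (α - 1) * (α * (vv - β) * T - β * (β ^ α + T)) := by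
      rw [hsplit]; ring
    rw [this]
    exact mul_pos hA (by linarith)
  have hslope : Filter.Tendsto (slope φ β) (nhdsWithin β {β}ᶜ) (nhds D) :=
    hasDerivAt_iff_tendsto_slope.mp hφD
  have hev1 : ∀ᶠ x in nhdsWithin β (Set.Ioi β), 0 < slope φ β x := by
    have := hslope.eventually (eventually_gt_nhds hDpos)
    exact this.filter_mono (nhdsWithin_mono β (fun x hx => ne_of_gt hx))
  have hev2 : ∀ᶠ x in nhdsWithin β (Set.Ioi β), x < vv :=
    (eventually_lt_nhds hβv).filter_mono nhdsWithin_le_nhds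
  have hPc : ContinuousAt P β := by
    apply ContinuousAt.div
    · exact (Real.continuousAt_rpow_const β α (Or.inl (ne_of_gt hβ)))
    · exact ((Real.continuousAt_rpow_const β α (Or.inl (ne_of_gt hβ))).add continuousAt_const)
    · exact ne_of_gt hden
  have hev3 : ∀ᶠ x in nhdsWithin β (Set.Ioi β), P x ≤ P β + ε := by
    have : ∀ᶠ x in nhds β, P x < P β + ε :=
      hPc.eventually (eventually_lt_nhds (lt_add_of_pos_right _ hε))
    exact (this.mono (fun x hx => le_of_lt hx)).filter_mono nhdsWithin_le_nhds
  have hev4 : ∀ᶠ x in nhdsWithin β (Set.Ioi β), β < x := eventually_mem_nhdsWithin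
  obtain ⟨x, hx1, hx2, hx3, hx4⟩ := (hev1.and (hev2.and (hev3.and hev4))).exists
  refine ⟨x, hx4, hx2, le_of_lt (lt_trans hβ hx4), ?_, hx3⟩
  have hs : slope φ β x = (φ x - φ β) / (x - β) := slope_def_field φ β x
  have hxβ : 0 < x - β := sub_pos.mpr hx4
  have : 0 < φ x - φ β := by
    have := mul_pos hx1 hxβ
    rwa [hs, div_mul_cancel₀ _ (ne_of_gt hxβ)] at this
  have hφeq : ∀ y : ℝ, φ y = y ^ α / (y ^ α + T) * (vv - y) := by
    intro y; rw [hφ]; ring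
  rw [hφeq, hφeq] at this
  linarith

set_option maxHeartbeats 1600000 in
/-- in the quasi-proportional FPA with parameter `α ≥ 1`, at equilibrium,
for a bidder `i` with `V i < B i` and a query `j` with `v i j > 0` and `0 < π i j ≤ η < 1`,
`Spend(j) ≥ v i j * α (1 - η) / ((n η)^{1/α} (α - α η + 1))`. -/
theorem stmt18 (n q : ℕ) (α : ℝ) (hα : 1 ≤ α) (B : Fin n → ℝ) (v b : Fin n → Fin q → ℝ)
    (hB : ∀ i, 0 < B i) (hv : ∀ i j, 0 ≤ v i j)
    (hb : IsQpEq α B v b) (i : Fin n) (j : Fin q)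
    (hVB : qpV α v b i < B i) (hvj : 0 < v i j)
    (η : ℝ) (hη0 : 0 < η) (hη1 : η < 1)
    (hpi0 : 0 < qpPi α b i j) (hpiη : qpPi α b i j ≤ η) :
    v i j * (α * (1 - η)) / (((n : ℝ) * η) ^ (1 / α) * (α - α * η + 1))
      ≤ qpSpendQ α b j := by
  obtain ⟨hbnn, hROS, hDEV⟩ := hb
  have hα0 : (0:ℝ) < α := lt_of_lt_of_le one_pos hα
  set β := b i j with hβdef
  set vij := v i j with hvijdef
  have hnz : ¬ ∀ i', b i' j = 0 := by
    intro h; rw [qpPi, if_pos h] at hpi0; exact lt_irrefl 0 hpi0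
  set S := ∑ i', b i' j ^ α with hSdef
  have hπeq : qpPi α b i j = β ^ α / S := by rw [qpPi, if_neg hnz]
  have hSnn : 0 ≤ S := Finset.sum_nonneg fun i' _ => Real.rpow_nonneg (hbnn i' j) α
  have hS0 : 0 < S := by
    rcases eq_or_lt_of_le hSnn with h | h
    · rw [hπeq, ← h, div_zero] at hpi0; exact absurd hpi0 (lt_irrefl 0)
    · exact h
  have hβα : 0 < β ^ α := by
    have h := hpi0
    rw [hπeq] at h
    have h2 := mul_pos h hS0
    rwa [div_mul_cancel₀ _ (ne_of_gt hS0)] at h2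
  have hβ0 : 0 < β := by
    rcases eq_or_lt_of_le (hbnn i j) with h | h
    · rw [hβdef, ← h, Real.zero_rpow (ne_of_gt hα0)] at hβα
      exact absurd hβα (lt_irrefl 0)
    · exact h
  set T := ∑ i' ∈ univ.erase i, b i' j ^ α with hTdef
  have hST : S = β ^ α + T := by
    rw [hSdef, hTdef, ← Finset.add_sum_erase _ _ (mem_univ i)]
  have hTnn : 0 ≤ T := Finset.sum_nonneg fun i' _ => Real.rpow_nonneg (hbnn i' j) α
  have hβαle : β ^ α ≤ η * S := by
    rw [hπeq, div_le_iff₀ hS0] at hpiη; linarith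
  have hT0 : 0 < T := by nlinarith
  have hT1 : (1 - η) * S ≤ T := by nlinarith
  set bs := α * (1 - η) * vij / (α * (1 - η) + 1) with hbs
  have hd1 : (0:ℝ) < α * (1 - η) + 1 := by nlinarith
  have hbsv : bs < vij := by
    rw [hbs, div_lt_iff₀ hd1]; nlinarith
  -- Step A : bs ≤ β
  have hA : bs ≤ β := by
    by_contra hlt
    push_neg at hlt
    have hβv : β < vij := lt_trans hlt hbsv
    have hk1 : β < α * (1 - η) * (vij - β) := by
      rw [hbs, lt_div_iff₀ hd1] at hlt
      nlinarith
    have hkey : β * (β ^ α + T) < α * (vij - β) * T := by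
      rw [← hST]
      have h1 : β * S < α * (1 - η) * (vij - β) * S := by nlinarith
      have h2 : α * (1 - η) * (vij - β) * S ≤ α * (vij - β) * T := by nlinarith
      linarith
    have hεpos : 0 < (B i - qpV α v b i) / vij := div_pos (by linarith) hvj
    obtain ⟨x, hxβ, hxv, hxnn, hφ1, hφ2⟩ :=
      qp_exists_dev α vij T β _ hα hT0 hβ0 hβv hkey hεpos
    -- the deviation bid vector
    set b' : Fin q → ℝ := Function.update (b i) j x with hb'
    have hb'nn : ∀ j', 0 ≤ b' j' := by
      intro j'
      rw [hb', Function.update_apply]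
      split
      · exact hxnn
      · exact hbnn i j'
    set newb := Function.update b i b' with hnewbdef
    have hnewb : ∀ i' j', newb i' j' = if i' = i ∧ j' = j then x else b i' j' := by
      intro i' j'
      rw [hnewbdef, Function.update_apply]
      by_cases h1 : i' = i <;> by_cases h2 : j' = j <;>
        simp [h1, h2, hb', Function.update_apply]
    have hcolj : ∀ j', j' ≠ j → ∀ i', newb i' j' = b i' j' := by
      intro j' hj' i'; rw [hnewb]; simp [hj']
    have hcoli : newb i j = x := by rw [hnewb]; simp
    have hcolo : ∀ i', i' ≠ i → newb i' j = b i' j := by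
      intro i' hi'; rw [hnewb]; simp [hi']
    have hS' : ∑ i', newb i' j ^ α = x ^ α + T := by
      rw [← Finset.add_sum_erase _ _ (mem_univ i), hcoli, hTdef]
      congr 1
      exact Finset.sum_congr rfl fun i' hi' => by
        rw [hcolo i' (Finset.ne_of_mem_erase hi')]
    have hxα : (0:ℝ) < x ^ α := Real.rpow_pos_of_pos (lt_of_le_of_lt (le_of_lt hβ0) hxβ) α
    have hden' : (0:ℝ) < x ^ α + T := by linarith
    have hnz' : ¬ ∀ i', newb i' j = 0 := by
      intro h
      have := h i
      rw [hcoli] at this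
      exact absurd this (ne_of_gt (lt_trans hβ0 hxβ))
    have hPnew : qpPi α newb i j = x ^ α / (x ^ α + T) := by
      rw [qpPi, if_neg hnz', hS', hcoli]
    have hπS : β ^ α / (β ^ α + T) = β ^ α / S := by rw [hST]
    -- value difference
    have e1 : qpV α v newb i = qpV α v b i + (x ^ α / (x ^ α + T) - β ^ α / S) * vij := by
      rw [qpV, qpV, ← Finset.add_sum_erase _ _ (mem_univ j), ← Finset.add_sum_erase _ _ (mem_univ j)]
      have herase : ∑ j' ∈ univ.erase j, qpPi α newb i j' * v i j'
          = ∑ j' ∈ univ.erase j, qpPi α b i j' * v i j' :=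
        Finset.sum_congr rfl fun j' hj' => by
          rw [qpPi_congr α newb b i j' (hcolj j' (Finset.ne_of_mem_erase hj'))]
      rw [herase, hPnew, hπeq]
      ring
    -- spend difference
    have e2 : qpSpendI α newb i = qpSpendI α b i
        + (x ^ α / (x ^ α + T) * x - β ^ α / S * β) := by
      rw [qpSpendI, qpSpendI, ← Finset.add_sum_erase _ _ (mem_univ j),
        ← Finset.add_sum_erase _ _ (mem_univ j)]
      have herase : ∑ j' ∈ univ.erase j, qpPi α newb i j' * newb i j'
          = ∑ j' ∈ univ.erase j, qpPi α b i j' * b i j' :=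
        Finset.sum_congr rfl fun j' hj' => by
          rw [qpPi_congr α newb b i j' (hcolj j' (Finset.ne_of_mem_erase hj')),
            hcolj j' (Finset.ne_of_mem_erase hj') i]
      rw [herase, hPnew, hπeq, hcoli]
      ring
    have hxαβ : β ^ α < x ^ α := Real.rpow_lt_rpow (le_of_lt hβ0) hxβ hα0
    have hPgt : β ^ α / S < x ^ α / (x ^ α + T) := by
      rw [hST, div_lt_div_iff₀ (by linarith) hden']
      nlinarith
    have hVgt : qpV α v b i < qpV α v newb i := by
      rw [e1]; nlinarith
    have hVle : qpV α v newb i ≤ B i := by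
      rw [e1]
      rw [hπS] at hφ2
      have h5 : (x ^ α / (x ^ α + T) - β ^ α / S) * vij ≤
          ((B i - qpV α v b i) / vij) * vij := by
        apply mul_le_mul_of_nonneg_right _ (le_of_lt hvj)
        linarith
      rw [div_mul_cancel₀ _ (ne_of_gt hvj)] at h5
      linarith
    have hSpendle : qpSpendI α newb i ≤ qpV α v newb i := by
      rw [e1, e2]
      have hr := hROS i
      have hr2 : qpSpendI α b i ≤ qpV α v b i := le_trans hr (min_le_right _ _)
      rw [hπS] at hφ1
      nlinarith
    rcases hDEV i b' hb'nn with h | h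
    · rw [← hnewbdef] at h; linarith
    · rw [← hnewbdef, min_eq_right hVle] at h; linarith
  -- Step B/C
  have hQ : qpSpendQ α b j = (∑ i', b i' j ^ α * b i' j) / S := by
    rw [qpSpendQ, Finset.sum_div]
    exact Finset.sum_congr rfl fun i' _ => by
      rw [qpPi, if_neg hnz, ← hSdef, div_mul_eq_mul_div]
  have hpm : (S / n) ^ (1/α) ≤ qpSpendQ α b j := by
    rw [hQ]
    exact qp_spend_ge α hα (fun i' => b i' j) (fun i' => hbnn i' j) hS0
  have hnR : (0:ℝ) < n := by
    have := i.pos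
    exact_mod_cast this
  have hfrac : β ^ α / (n * η) ≤ S / n := by
    rw [div_le_div_iff₀ (by positivity) hnR]
    nlinarith
  have hmono : (β ^ α / ((n:ℝ) * η)) ^ (1/α) ≤ (S / n) ^ (1/α) :=
    Real.rpow_le_rpow (by positivity) hfrac (by positivity)
  have hsimp : (β ^ α / ((n:ℝ) * η)) ^ (1/α) = β / ((n:ℝ) * η) ^ (1/α) := by
    rw [Real.div_rpow (Real.rpow_nonneg (le_of_lt hβ0) α) (by positivity)]
    congr 1
    rw [← Real.rpow_mul (le_of_lt hβ0), mul_one_div, div_self (ne_of_gt hα0), Real.rpow_one]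
  have hXpos : (0:ℝ) < ((n:ℝ) * η) ^ (1/α) := Real.rpow_pos_of_pos (by positivity) _
  have hfin : bs / ((n:ℝ) * η) ^ (1/α) ≤ β / ((n:ℝ) * η) ^ (1/α) := by
    gcongr
  have htarget : vij * (α * (1 - η)) / (((n : ℝ) * η) ^ (1 / α) * (α - α * η + 1))
      = bs / ((n:ℝ) * η) ^ (1/α) := by
    rw [hbs]
    have : α - α * η + 1 = α * (1 - η) + 1 := by ring
    rw [this]
    field_simp
  rw [htarget]
  calc bs / ((n:ℝ) * η) ^ (1/α) ≤ β / ((n:ℝ) * η) ^ (1/α) := hfin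
    _ = (β ^ α / ((n:ℝ) * η)) ^ (1/α) := hsimp.symm
    _ ≤ (S / n) ^ (1/α) := hmono
    _ ≤ qpSpendQ α b j := hpm
end
end

section
/- For the quasi-proportional first-price auction with bidders having both ROS and budget constraints: for every alpha ≥ 1, every eta in (0,1), every instance with n bidders, and every equilibrium bid profile, OPT ≤ (1/eta + (n·eta)^{1/alpha} · (alpha − alpha·eta + 1) / (alpha · (1 − eta))) · LW. Consequently, for every ε > 0 and every n there exists alpha_0 ≥ 1 such that for all alpha ≥ alpha_0, every equilibrium satisfies OPT ≤ (2 + ε) · LW; i.e., as alpha → ∞ the price of anarchy of the quasi-proportional first-price auction is at most 2. -/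
open Finset
open scoped Classical

noncomputable section

/-- Hölder consequence: `(∑ f^α)^(1/α) ≤ n^(1/α) * (∑ f^(α+1)) / (∑ f^α)`. -/
lemma holder_aux {n : ℕ} (α : ℝ) (hα : 1 ≤ α) (f : Fin n → ℝ) (hf : ∀ i, 0 ≤ f i)
    (hS : 0 < ∑ i, f i ^ α) :
    (∑ i, f i ^ α) ^ (1/α) ≤ (n : ℝ) ^ (1/α) * ((∑ i, f i ^ (α+1)) / (∑ i, f i ^ α)) := by
  have hα0 : 0 < α := lt_of_lt_of_le one_pos hα
  have hα0' : α ≠ 0 := ne_of_gt hα0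
  have hα1 : (0:ℝ) < α + 1 := by linarith
  set S := ∑ i, f i ^ α with hSdef
  set P := ∑ i, f i ^ (α+1) with hPdef
  have hP : 0 ≤ P := Finset.sum_nonneg fun i _ => Real.rpow_nonneg (hf i) _
  have hconj : Real.HolderConjugate ((α+1)/α) (α+1) := by
    rw [Real.holderConjugate_iff]; constructor
    · rw [lt_div_iff₀ hα0]; linarith
    · rw [inv_div]; field_simp
  have H := Real.inner_le_Lp_mul_Lq (s := (univ : Finset (Fin n)))
      (fun i => f i ^ α) (fun _ => (1:ℝ)) hconj
  simp only [mul_one, abs_one, Real.one_rpow] at H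
  have habs : ∀ i, |f i ^ α| ^ ((α+1)/α) = f i ^ (α+1) := by
    intro i
    rw [abs_of_nonneg (Real.rpow_nonneg (hf i) _), ← Real.rpow_mul (hf i)]
    congr 1
    field_simp
  simp only [habs] at H
  rw [Finset.sum_const, card_univ, Fintype.card_fin, nsmul_eq_mul, mul_one] at H
  -- H : S ≤ P ^ (1/((α+1)/α)) * n ^ (1/(α+1))
  have h1p : 1/((α+1)/α) = α/(α+1) := by rw [one_div, inv_div]
  rw [h1p] at H
  -- raise both sides to (α+1)/α
  have key : S ^ ((α+1)/α) ≤ P * (n : ℝ) ^ (1/α) := by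
    have := Real.rpow_le_rpow (le_of_lt hS) H (by positivity : (0:ℝ) ≤ (α+1)/α)
    refine this.trans_eq ?_
    rw [Real.mul_rpow (Real.rpow_nonneg hP _) (Real.rpow_nonneg (Nat.cast_nonneg n) _),
      ← Real.rpow_mul hP, ← Real.rpow_mul (Nat.cast_nonneg n)]
    congr 1
    · rw [div_mul_div_comm]
      rw [show α * (α+1) = (α+1) * α by ring, div_self (by positivity), Real.rpow_one]
    · congr 1
      field_simp
  have hsplit : S ^ ((α+1)/α) = S ^ (1/α) * S := by
    rw [show (α+1)/α = 1/α + 1 by field_simp; ring, Real.rpow_add hS, Real.rpow_one]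
  rw [hsplit] at key
  rw [mul_div_assoc'] at *
  rw [le_div_iff₀ hS]
  calc S ^ (1/α) * S ≤ P * (n:ℝ) ^ (1/α) := key
    _ = (n:ℝ) ^ (1/α) * P := mul_comm _ _

lemma qpPi_nonneg {n q : ℕ} (α : ℝ) (b : Fin n → Fin q → ℝ) (hb : ∀ i j, 0 ≤ b i j)
    (i : Fin n) (j : Fin q) : 0 ≤ qpPi α b i j := by
  unfold qpPi
  split
  · exact le_refl 0
  · exact div_nonneg (Real.rpow_nonneg (hb i j) _)
      (Finset.sum_nonneg fun i' _ => Real.rpow_nonneg (hb i' j) _)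

lemma qpSpendQ_nonneg {n q : ℕ} (α : ℝ) (b : Fin n → Fin q → ℝ) (hb : ∀ i j, 0 ≤ b i j)
    (j : Fin q) : 0 ≤ qpSpendQ α b j :=
  Finset.sum_nonneg fun i _ => mul_nonneg (qpPi_nonneg α b hb i j) (hb i j)

/-- The spend on a non-trivial query dominates `S^(1/α) / n^(1/α)`. -/
lemma spendQ_bound {n q : ℕ} (α : ℝ) (hα : 1 ≤ α) (b : Fin n → Fin q → ℝ)
    (hb : ∀ i j, 0 ≤ b i j) (j : Fin q) (hne : ¬ ∀ i', b i' j = 0) :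
    (∑ i', b i' j ^ α) ^ (1/α) ≤ (n : ℝ) ^ (1/α) * qpSpendQ α b j := by
  have hα0 : 0 < α := lt_of_lt_of_le one_pos hα
  have hS : 0 < ∑ i', b i' j ^ α := by
    push_neg at hne
    obtain ⟨i₀, hi₀⟩ := hne
    have h0 : 0 < b i₀ j := lt_of_le_of_ne (hb i₀ j) (Ne.symm hi₀)
    refine Finset.sum_pos' (fun i' _ => Real.rpow_nonneg (hb i' j) _) ⟨i₀, mem_univ _, ?_⟩
    exact Real.rpow_pos_of_pos h0 _
  have hform : qpSpendQ α b j = (∑ i', b i' j ^ (α+1)) / (∑ i', b i' j ^ α) := by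
    unfold qpSpendQ qpPi
    simp only [if_neg hne]
    rw [Finset.sum_div]
    refine Finset.sum_congr rfl fun i' _ => ?_
    rw [div_mul_eq_mul_div]
    congr 1
    rcases eq_or_lt_of_le (hb i' j) with h | h
    · rw [← h, Real.zero_rpow (by positivity : α + 1 ≠ 0), Real.zero_rpow (ne_of_gt hα0),
        zero_mul]
    · rw [Real.rpow_add_one (ne_of_gt h)]
  rw [hform]
  exact holder_aux α hα (fun i' => b i' j) (fun i' => hb i' j) hS

lemma qpSpendI_nonneg {n q : ℕ} (α : ℝ) (b : Fin n → Fin q → ℝ) (hb : ∀ i j, 0 ≤ b i j)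
    (i : Fin n) : 0 ≤ qpSpendI α b i :=
  Finset.sum_nonneg fun j _ => mul_nonneg (qpPi_nonneg α b hb i j) (hb i j)

/-- Key per-bidder inequality extracted from the equilibrium deviation. -/
lemma key_bidder {n q : ℕ} (α : ℝ) (hα : 1 ≤ α) (η : ℝ) (hη0 : 0 < η) (hη1 : η < 1)
    (B : Fin n → ℝ) (v b π : Fin n → Fin q → ℝ)
    (hB : ∀ i, 0 < B i) (hv : ∀ i j, 0 ≤ v i j) (heq : IsQpEq α B v b) (hπ : IsAlloc π)
    (i : Fin n) :
    min (η * B i) (η * ∑ j, π i j * v i j) ≤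
      min (B i) (qpV α v b i)
        + η * (((n:ℝ) * η / (1 - η)) ^ (1/α)) * ∑ j, π i j * qpSpendQ α b j := by
  obtain ⟨hb, hros, hdev⟩ := heq
  obtain ⟨hπ0, hπ1, hπsum⟩ := hπ
  have hα0 : 0 < α := lt_of_lt_of_le one_pos hα
  have h1η : 0 < 1 - η := by linarith
  set C : ℝ := ((n:ℝ) * η / (1 - η)) ^ (1/α) with hC
  have hC0 : 0 ≤ C := Real.rpow_nonneg (by positivity) _
  set K : ℝ := ∑ j, π i j * qpSpendQ α b j with hK
  have hK0 : 0 ≤ K :=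
    Finset.sum_nonneg fun j _ => mul_nonneg (hπ0 i j) (qpSpendQ_nonneg α b hb j)
  set T : Fin q → ℝ := fun j => ∑ i' ∈ univ.erase i, b i' j ^ α with hT
  have hT0 : ∀ j, 0 ≤ T j := fun j =>
    Finset.sum_nonneg fun i' _ => Real.rpow_nonneg (hb i' j) _
  set dev : ℝ → Fin q → ℝ := fun ε j =>
    if π i j = 0 then 0 else if T j = 0 then ε
    else ((η * π i j / (1 - η * π i j)) * T j) ^ (1/α) with hdevdef
  have hdev0 : ∀ ε, 0 < ε → ∀ j, 0 ≤ dev ε j := by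
    intro ε hε j
    simp only [hdevdef]
    split
    · exact le_refl 0
    split
    · exact le_of_lt hε
    · refine Real.rpow_nonneg ?_ _
      have hπj : 0 < π i j := lt_of_le_of_ne (hπ0 i j) (Ne.symm ‹¬ π i j = 0›)
      have h2 : η * π i j < 1 := by nlinarith [hπ1 i j]
      exact mul_nonneg (div_nonneg (by positivity) (by linarith)) (hT0 j)
  have hdenom : ∀ ε j, (∑ i', (Function.update b i (dev ε) i' j) ^ α) = dev ε j ^ α + T j := by
    intro ε j
    rw [← Finset.add_sum_erase univ _ (mem_univ i)]
    congr 1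
    · rw [Function.update_self]
    · exact Finset.sum_congr rfl fun i' hi' => by
        rw [Function.update_of_ne (Finset.ne_of_mem_erase hi')]
  have hmain : ∀ ε, 0 < ε → ∀ j,
      η * π i j ≤ qpPi α (Function.update b i (dev ε)) i j ∧
      qpPi α (Function.update b i (dev ε)) i j * dev ε j
        ≤ η * C * (π i j * qpSpendQ α b j) + ε := by
    intro ε hε j
    have hrhs0 : 0 ≤ η * C * (π i j * qpSpendQ α b j) :=
      mul_nonneg (mul_nonneg (le_of_lt hη0) hC0)
        (mul_nonneg (hπ0 i j) (qpSpendQ_nonneg α b hb j))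
    by_cases hπj : π i j = 0
    · have hd : dev ε j = 0 := by simp [hdevdef, hπj]
      have hp' : qpPi α (Function.update b i (dev ε)) i j = 0 := by
        unfold qpPi
        split
        · rfl
        · rw [Function.update_self, hd, Real.zero_rpow (ne_of_gt hα0), zero_div]
      constructor
      · rw [hp', hπj, mul_zero]
      · rw [hp', zero_mul]; linarith
    · have hπjpos : 0 < π i j := lt_of_le_of_ne (hπ0 i j) (Ne.symm hπj)
      have hηπ : 0 < η * π i j := mul_pos hη0 hπjpos
      have hηπ1 : η * π i j < 1 := by nlinarith [hπ1 i j]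
      by_cases hTj : T j = 0
      · have hd : dev ε j = ε := by simp [hdevdef, hπj, hTj]
        have hp' : qpPi α (Function.update b i (dev ε)) i j = 1 := by
          unfold qpPi
          rw [if_neg, hdenom ε j, hTj, add_zero, Function.update_self, hd,
            div_self (ne_of_gt (Real.rpow_pos_of_pos hε α))]
          intro hall
          have := hall i
          rw [Function.update_self, hd] at this
          exact absurd this (ne_of_gt hε)
        constructor
        · rw [hp']; exact le_of_lt hηπ1
        · rw [hp', one_mul, hd]; linarith
      · have hTpos : 0 < T j := lt_of_le_of_ne (hT0 j) (Ne.symm hTj)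
        set c := η * π i j / (1 - η * π i j) with hc
        have hcpos : 0 < c := div_pos hηπ (by linarith)
        have hd : dev ε j = (c * T j) ^ (1/α) := by simp [hdevdef, hπj, hTj, hc]
        have hdpos : 0 < dev ε j := by
          rw [hd]; exact Real.rpow_pos_of_pos (mul_pos hcpos hTpos) _
        have hdα : dev ε j ^ α = c * T j := by
          rw [hd, ← Real.rpow_mul (le_of_lt (mul_pos hcpos hTpos)), one_div,
            inv_mul_cancel₀ (ne_of_gt hα0), Real.rpow_one]
        have hp' : qpPi α (Function.update b i (dev ε)) i j = η * π i j := by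
          unfold qpPi
          rw [if_neg, hdenom ε j, Function.update_self, hdα]
          · rw [show c * T j + T j = (c + 1) * T j by ring,
              mul_div_mul_right _ _ (ne_of_gt hTpos)]
            rw [hc]
            have h1 : (1 : ℝ) - η * π i j ≠ 0 := by linarith
            field_simp
            ring
          · intro hall
            have := hall i
            rw [Function.update_self] at this
            exact absurd this (ne_of_gt hdpos)
        refine ⟨le_of_eq hp'.symm, ?_⟩
        rw [hp', hd]
        have hne : ¬ ∀ i', b i' j = 0 := by
          intro hall
          apply hTj
          rw [hT]
          refine Finset.sum_eq_zero fun i' _ => ?_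
          rw [hall i', Real.zero_rpow (ne_of_gt hα0)]
        have hTS : T j ≤ ∑ i', b i' j ^ α :=
          Finset.sum_le_sum_of_subset_of_nonneg (Finset.erase_subset _ _)
            (fun i' _ _ => Real.rpow_nonneg (hb i' j) _)
        have h1 : (T j) ^ (1/α) ≤ (n:ℝ) ^ (1/α) * qpSpendQ α b j :=
          le_trans (Real.rpow_le_rpow (hT0 j) hTS (by positivity))
            (spendQ_bound α hα b hb j hne)
        have hcle : c ≤ η / (1 - η) := by
          rw [hc]
          apply div_le_div₀ (le_of_lt hη0)
            (by nlinarith [mul_le_mul_of_nonneg_left (hπ1 i j) (le_of_lt hη0)]) h1η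
            (by nlinarith [mul_le_mul_of_nonneg_left (hπ1 i j) (le_of_lt hη0)])
        have h2 : c ^ (1/α) ≤ (η / (1-η)) ^ (1/α) :=
          Real.rpow_le_rpow (le_of_lt hcpos) hcle (by positivity)
        have hCsplit : C = (η/(1-η)) ^ (1/α) * (n:ℝ) ^ (1/α) := by
          rw [hC, show (n:ℝ) * η / (1 - η) = (η/(1-η)) * n by ring,
            Real.mul_rpow (div_nonneg (le_of_lt hη0) (le_of_lt h1η)) (Nat.cast_nonneg n)]
        have hεθ : (0:ℝ) < ε := hε
        calc η * π i j * (c * T j) ^ (1/α)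
            = η * π i j * (c ^ (1/α) * (T j) ^ (1/α)) := by
              rw [Real.mul_rpow (le_of_lt hcpos) (hT0 j)]
          _ ≤ η * π i j * ((η/(1-η)) ^ (1/α) * ((n:ℝ) ^ (1/α) * qpSpendQ α b j)) := by
              refine mul_le_mul_of_nonneg_left ?_ (le_of_lt hηπ)
              exact mul_le_mul h2 h1 (Real.rpow_nonneg (hT0 j) _)
                (Real.rpow_nonneg (div_nonneg (le_of_lt hη0) (le_of_lt h1η)) _)
          _ = η * C * (π i j * qpSpendQ α b j) := by rw [hCsplit]; ring
          _ ≤ η * C * (π i j * qpSpendQ α b j) + ε := by linarith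
  have hval : ∀ ε, 0 < ε →
      η * ∑ j, π i j * v i j ≤ qpV α v (Function.update b i (dev ε)) i := by
    intro ε hε
    rw [Finset.mul_sum]
    unfold qpV
    refine Finset.sum_le_sum fun j _ => ?_
    rw [← mul_assoc]
    exact mul_le_mul_of_nonneg_right (hmain ε hε j).1 (hv i j)
  have hspend : ∀ ε, 0 < ε →
      qpSpendI α (Function.update b i (dev ε)) i ≤ η * C * K + ε * q := by
    intro ε hε
    unfold qpSpendI
    calc ∑ j, qpPi α (Function.update b i (dev ε)) i j * Function.update b i (dev ε) i j
        ≤ ∑ j, (η * C * (π i j * qpSpendQ α b j) + ε) := by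
          refine Finset.sum_le_sum fun j _ => ?_
          rw [Function.update_self]
          exact (hmain ε hε j).2
      _ = η * C * K + ε * q := by
          rw [Finset.sum_add_distrib, ← Finset.mul_sum, Finset.sum_const, card_univ,
            Fintype.card_fin, nsmul_eq_mul, mul_comm (q:ℝ) ε]
  have hminB : min (η * B i) (η * ∑ j, π i j * v i j) ≤ B i :=
    le_trans (min_le_left _ _) (by nlinarith [hB i])
  have hmin0 : 0 ≤ min (B i) (qpV α v b i) :=
    le_trans (qpSpendI_nonneg α b hb i) (hros i)
  by_cases hexists : ∃ ε, 0 < ε ∧ qpV α v (Function.update b i (dev ε)) i ≤ qpV α v b i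
  · obtain ⟨ε, hε, hle⟩ := hexists
    have h1 : min (η * B i) (η * ∑ j, π i j * v i j) ≤ qpV α v b i :=
      le_trans (min_le_right _ _) (le_trans (hval ε hε) hle)
    have h2 : min (η * B i) (η * ∑ j, π i j * v i j) ≤ min (B i) (qpV α v b i) :=
      le_min hminB h1
    nlinarith [mul_nonneg (mul_nonneg (le_of_lt hη0) hC0) hK0]
  · push_neg at hexists
    have hkey : ∀ ε, 0 < ε → min (B i) (qpV α v (Function.update b i (dev ε)) i)
        < qpSpendI α (Function.update b i (dev ε)) i := by
      intro ε hε
      rcases hdev i (dev ε) (hdev0 ε hε) with h | h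
      · exact absurd h (not_le_of_gt (hexists ε hε))
      · exact h
    have hlt : ∀ δ : ℝ, 0 < δ →
        min (η * B i) (η * ∑ j, π i j * v i j) < η * C * K + δ := by
      intro δ hδ
      have hq1 : (0:ℝ) < (q:ℝ) + 1 := by positivity
      set ε := δ / ((q:ℝ) + 1) with hεdef
      have hεpos : 0 < ε := div_pos hδ hq1
      have h1 : min (η * B i) (η * ∑ j, π i j * v i j)
          ≤ min (B i) (qpV α v (Function.update b i (dev ε)) i) :=
        le_min hminB (le_trans (min_le_right _ _) (hval ε hεpos))
      have h2 : ε * q ≤ δ := by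
        rw [hεdef, div_mul_eq_mul_div, div_le_iff₀ hq1]
        nlinarith
      calc min (η * B i) (η * ∑ j, π i j * v i j)
          ≤ min (B i) (qpV α v (Function.update b i (dev ε)) i) := h1
        _ < qpSpendI α (Function.update b i (dev ε)) i := hkey ε hεpos
        _ ≤ η * C * K + ε * q := hspend ε hεpos
        _ ≤ η * C * K + δ := by linarith
    have hfinal : min (η * B i) (η * ∑ j, π i j * v i j) ≤ η * C * K := by
      by_contra hcon
      push_neg at hcon
      have := hlt (min (η * B i) (η * ∑ j, π i j * v i j) - η * C * K) (by linarith)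
      linarith
    linarith

lemma qpLW_nonneg {n q : ℕ} (α : ℝ) (B : Fin n → ℝ) (v b : Fin n → Fin q → ℝ)
    (heq : IsQpEq α B v b) : 0 ≤ qpLW α B v b :=
  Finset.sum_nonneg fun i _ =>
    le_trans (qpSpendI_nonneg α b heq.1 i) (heq.2.1 i)

lemma part1 {n q : ℕ} (α : ℝ) (hα : 1 ≤ α) (η : ℝ) (hη0 : 0 < η) (hη1 : η < 1)
    (B : Fin n → ℝ) (v b : Fin n → Fin q → ℝ)
    (hB : ∀ i, 0 < B i) (hv : ∀ i j, 0 ≤ v i j) (heq : IsQpEq α B v b)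
    (OPT : ℝ)
    (hOPT : IsGreatest {w : ℝ | ∃ π : Fin n → Fin q → ℝ, IsAlloc π ∧ w = allocLW B v π} OPT) :
    OPT ≤ (1 / η + ((n : ℝ) * η) ^ (1 / α) * (α - α * η + 1) / (α * (1 - η)))
          * qpLW α B v b := by
  obtain ⟨⟨π, hπ, hOPTeq⟩, _⟩ := hOPT
  have hα0 : 0 < α := lt_of_lt_of_le one_pos hα
  have h1η : 0 < 1 - η := by linarith
  set C : ℝ := ((n:ℝ) * η / (1 - η)) ^ (1/α) with hCdef
  have hC0 : 0 ≤ C := Real.rpow_nonneg (by positivity) _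
  have hLW0 : 0 ≤ qpLW α B v b := qpLW_nonneg α B v b heq
  have hsum := Finset.sum_le_sum
    (fun i (_ : i ∈ univ) => key_bidder α hα η hη0 hη1 B v b π hB hv heq hπ i)
  have hL : ∑ i, min (η * B i) (η * ∑ j, π i j * v i j) = η * OPT := by
    rw [hOPTeq]
    unfold allocLW
    rw [Finset.mul_sum]
    exact Finset.sum_congr rfl fun i _ => (mul_min_of_nonneg _ _ (le_of_lt hη0)).symm
  have hR : ∑ i, (min (B i) (qpV α v b i) + η * C * ∑ j, π i j * qpSpendQ α b j)
      = qpLW α B v b + η * C * ∑ i, ∑ j, π i j * qpSpendQ α b j := by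
    rw [Finset.sum_add_distrib, ← Finset.mul_sum]
    rfl
  have hKsum : ∑ i, ∑ j, π i j * qpSpendQ α b j ≤ qpLW α B v b := by
    rw [Finset.sum_comm]
    calc ∑ j, ∑ i, π i j * qpSpendQ α b j
        = ∑ j, (∑ i, π i j) * qpSpendQ α b j := by
          refine Finset.sum_congr rfl fun j _ => ?_
          rw [Finset.sum_mul]
      _ ≤ ∑ j, qpSpendQ α b j := by
          refine Finset.sum_le_sum fun j _ => ?_
          have h1 := qpSpendQ_nonneg α b heq.1 j
          nlinarith [hπ.2.2 j]
      _ = ∑ i, qpSpendI α b i := by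
          unfold qpSpendQ qpSpendI
          rw [Finset.sum_comm]
      _ ≤ ∑ i, min (B i) (qpV α v b i) := Finset.sum_le_sum fun i _ => heq.2.1 i
  have step : η * OPT ≤ qpLW α B v b + η * C * qpLW α B v b := by
    calc η * OPT = ∑ i, min (η * B i) (η * ∑ j, π i j * v i j) := hL.symm
      _ ≤ ∑ i, (min (B i) (qpV α v b i) + η * C * ∑ j, π i j * qpSpendQ α b j) := hsum
      _ = qpLW α B v b + η * C * ∑ i, ∑ j, π i j * qpSpendQ α b j := hR
      _ ≤ qpLW α B v b + η * C * qpLW α B v b := by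
          have := mul_le_mul_of_nonneg_left hKsum
            (mul_nonneg (le_of_lt hη0) hC0)
          linarith
  have hOPTle : OPT ≤ (1/η + C) * qpLW α B v b := by
    have heq2 : qpLW α B v b + η * C * qpLW α B v b = η * ((1/η + C) * qpLW α B v b) := by
      field_simp
    rw [heq2] at step
    exact le_of_mul_le_mul_left step hη0
  have hfin : C ≤ ((n:ℝ)*η)^(1/α) * (α - α*η + 1) / (α*(1-η)) := by
    have hb1 : ((1:ℝ)/(1-η)) ^ (1/α) ≤ 1 + 1/(α*(1-η)) := by
      have hs0 : (0:ℝ) ≤ 1/(α*(1-η)) := by positivity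
      have hbern := one_add_mul_self_le_rpow_one_add
        (s := 1/(α*(1-η))) (by linarith) hα
      have hLHS : 1 + α * (1/(α*(1-η))) = 1 + 1/(1-η) := by
        field_simp
      rw [hLHS] at hbern
      have hpos : (0:ℝ) ≤ 1/(1-η) := by positivity
      have h3 : ((1:ℝ)/(1-η)) ≤ (1 + 1/(α*(1-η)))^α := le_trans (by linarith) hbern
      have h4 := Real.rpow_le_rpow hpos h3 (le_of_lt (by positivity : (0:ℝ) < 1/α))
      rwa [← Real.rpow_mul (by positivity), mul_one_div, div_self (ne_of_gt hα0),
        Real.rpow_one] at h4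
    have hCsplit : C = ((n:ℝ)*η)^(1/α) * ((1:ℝ)/(1-η))^(1/α) := by
      rw [hCdef, show (n:ℝ)*η/(1-η) = ((n:ℝ)*η) * (1/(1-η)) by ring,
        Real.mul_rpow (by positivity) (by positivity)]
    rw [hCsplit]
    have h5 : 1 + 1/(α*(1-η)) = (α - α*η + 1)/(α*(1-η)) := by
      field_simp
    calc ((n:ℝ)*η)^(1/α) * ((1:ℝ)/(1-η))^(1/α)
        ≤ ((n:ℝ)*η)^(1/α) * (1 + 1/(α*(1-η))) :=
          mul_le_mul_of_nonneg_left hb1 (Real.rpow_nonneg (by positivity) _)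
      _ = ((n:ℝ)*η)^(1/α) * (α - α*η + 1) / (α*(1-η)) := by rw [h5]; ring
  calc OPT ≤ (1/η + C) * qpLW α B v b := hOPTle
    _ ≤ (1 / η + ((n : ℝ) * η) ^ (1 / α) * (α - α * η + 1) / (α * (1 - η)))
          * qpLW α B v b := mul_le_mul_of_nonneg_right (by linarith) hLW0

open Filter in
lemma part2 (ε : ℝ) (hε : 0 < ε) (n : ℕ) :
    ∃ α₀ : ℝ, 1 ≤ α₀ ∧ ∀ α : ℝ, α₀ ≤ α →
      ∀ (q : ℕ) (B : Fin n → ℝ) (v b : Fin n → Fin q → ℝ),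
        (∀ i, 0 < B i) → (∀ i j, 0 ≤ v i j) → IsQpEq α B v b →
        ∀ OPT : ℝ,
          IsGreatest {w : ℝ | ∃ π : Fin n → Fin q → ℝ, IsAlloc π ∧ w = allocLW B v π} OPT →
          OPT ≤ (2 + ε) * qpLW α B v b := by
  rcases Nat.eq_zero_or_pos n with hn | hn
  · subst hn
    refine ⟨1, le_refl 1, ?_⟩
    intro α hα q B v b hB hv heq OPT hOPT
    have h0 : qpLW α B v b = 0 := by
      unfold qpLW
      exact Finset.sum_of_isEmpty _
    have := part1 α hα (1/2) (by norm_num) (by norm_num) B v b hB hv heq OPT hOPT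
    rw [h0] at this ⊢
    simpa using this
  · set η : ℝ := 2/(2+ε) with hηdef
    have hη0 : 0 < η := by positivity
    have hη1 : η < 1 := by
      rw [hηdef, div_lt_one (by linarith)]
      linarith
    have h1η : 0 < 1 - η := by linarith
    have hc : (0:ℝ) < (n:ℝ)*η := mul_pos (by exact_mod_cast hn) hη0
    have h1 : Tendsto (fun α : ℝ => ((n:ℝ)*η) ^ (1/α)) atTop (nhds 1) := by
      have hrw : ∀ α : ℝ, ((n:ℝ)*η) ^ (1/α) = Real.exp (Real.log ((n:ℝ)*η) * (1/α)) :=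
        fun α => Real.rpow_def_of_pos hc _
      simp_rw [hrw]
      have h2 : Tendsto (fun α:ℝ => Real.log ((n:ℝ)*η) * (1/α)) atTop (nhds 0) := by
        simpa [one_div] using tendsto_inv_atTop_zero.const_mul (Real.log ((n:ℝ)*η))
      have := (Real.continuous_exp.tendsto 0).comp h2
      rw [Real.exp_zero] at this
      exact this
    have h2 : Tendsto (fun α : ℝ => (α - α*η + 1)/(α*(1-η))) atTop (nhds 1) := by
      have hev : (fun α:ℝ => 1 + (1/(1-η)) * (1/α)) =ᶠ[atTop]
          (fun α : ℝ => (α - α*η + 1)/(α*(1-η))) := by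
        filter_upwards [eventually_gt_atTop 0] with α hα
        field_simp
      have hten : Tendsto (fun α:ℝ => 1 + (1/(1-η)) * (1/α)) atTop (nhds 1) := by
        have h3 := tendsto_inv_atTop_zero.const_mul (1/(1-η)) (f := fun x : ℝ => x⁻¹)
        simpa [one_div] using tendsto_const_nhds.add h3
      exact hten.congr' hev
    have h3 : Tendsto (fun α : ℝ => 1/η + ((n:ℝ)*η)^(1/α) * (α - α*η + 1)/(α*(1-η)))
        atTop (nhds (1/η + 1*1)) := by
      simp_rw [mul_div_assoc]
      exact tendsto_const_nhds.add (h1.mul h2)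
    have hηinv : 1/η = (2+ε)/2 := by rw [hηdef, one_div_div]
    have hlim : 1/η + 1*1 < 2 + ε := by
      rw [hηinv]
      linarith
    have hev2 := h3.eventually_lt_const hlim
    obtain ⟨a, ha⟩ := Filter.eventually_atTop.mp hev2
    refine ⟨max a 1, le_max_right _ _, ?_⟩
    intro α hαge q B v b hB hv heq OPT hOPT
    have hα1 : 1 ≤ α := le_trans (le_max_right a 1) hαge
    have hcoef := ha α (le_trans (le_max_left a 1) hαge)
    have hmain := part1 α hα1 η hη0 hη1 B v b hB hv heq OPT hOPT
    have hLW0 := qpLW_nonneg α B v b heq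
    calc OPT ≤ (1 / η + ((n : ℝ) * η) ^ (1 / α) * (α - α * η + 1) / (α * (1 - η)))
          * qpLW α B v b := hmain
      _ ≤ (2+ε) * qpLW α B v b := mul_le_mul_of_nonneg_right (le_of_lt hcoef) hLW0


/-- PoA bound for the quasi-proportional FPA. First, for every `α ≥ 1` and
`η ∈ (0,1)`, every equilibrium of the quasi-proportional FPA with ROS and budget constraints
satisfies `OPT ≤ (1/η + (nη)^{1/α}(α - αη + 1)/(α(1-η))) * LW`. Consequently, for every
`ε > 0` and every `n`, for all sufficiently large `α` every equilibrium satisfies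
`OPT ≤ (2 + ε) * LW`: as `α → ∞` the PoA is at most 2. -/
theorem stmt19 :
    (∀ (α : ℝ), 1 ≤ α → ∀ (η : ℝ), 0 < η → η < 1 →
      ∀ (n q : ℕ) (B : Fin n → ℝ) (v b : Fin n → Fin q → ℝ),
        (∀ i, 0 < B i) → (∀ i j, 0 ≤ v i j) → IsQpEq α B v b →
        ∀ OPT : ℝ,
          IsGreatest {w : ℝ | ∃ π : Fin n → Fin q → ℝ, IsAlloc π ∧ w = allocLW B v π} OPT →
          OPT ≤ (1 / η + ((n : ℝ) * η) ^ (1 / α) * (α - α * η + 1) / (α * (1 - η)))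
                * qpLW α B v b) ∧
    (∀ ε : ℝ, 0 < ε → ∀ n : ℕ, ∃ α₀ : ℝ, 1 ≤ α₀ ∧ ∀ α : ℝ, α₀ ≤ α →
      ∀ (q : ℕ) (B : Fin n → ℝ) (v b : Fin n → Fin q → ℝ),
        (∀ i, 0 < B i) → (∀ i j, 0 ≤ v i j) → IsQpEq α B v b →
        ∀ OPT : ℝ,
          IsGreatest {w : ℝ | ∃ π : Fin n → Fin q → ℝ, IsAlloc π ∧ w = allocLW B v π} OPT →
          OPT ≤ (2 + ε) * qpLW α B v b) := by
  constructor
  · intro α hα η hη0 hη1 n q B v b hB hv heq OPT hOPT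
    exact part1 α hα η hη0 hη1 B v b hB hv heq OPT hOPT
  · intro ε hε n
    exact part2 ε hε n
end
end
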